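/- Let p be a prime, k ≥ 3, G ⊆ (Z/(k+1))^*, with 1 ≤ |G| ≤ k. Define P(X) = ∏_{i=1}^k (c_i + X) for some constants c_i in Z/(k+1), and Q(X) = Σ_{m∈G} (1 - (X-m)^k). If P and Q agree on all of Z/(k+1) and both have degree at most k, then P = Q as polynomials; in particular comparing leading coefficients gives 1 ≡ -|G| (mod k+1), hence |G| = k. -/
import Mathlib


open Polynomial in
theorem stmt_3 (k : ℕ) (hk : 3 ≤ k) (hp : Nat.Prime (k + 1))
    (G : Finset (ZMod (k + 1))ˣ) (hG1 : 1 ≤ G.card) (hGk : G.card ≤ k)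
    (c : Fin k → ZMod (k + 1))
    (P Q : Polynomial (ZMod (k + 1)))
    (hP : P = ∏ i : Fin k, (X + C (c i)))
    (hQ : Q = ∑ m ∈ G, (1 - (X - C (m : ZMod (k + 1))) ^ k))
    (hagree : ∀ x : ZMod (k + 1), P.eval x = Q.eval x)
    (hdP : P.natDegree ≤ k) (hdQ : Q.natDegree ≤ k) :
    P = Q ∧ (1 : ZMod (k + 1)) = -(G.card : ZMod (k + 1)) ∧ G.card = k := by
  haveI : Fact (Nat.Prime (k + 1)) := ⟨hp⟩
  have hPQ : P = Q := by
    have h0 : P - Q = 0 := by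
      apply Polynomial.eq_zero_of_natDegree_lt_card_of_eval_eq_zero'
        (P - Q) (Finset.univ : Finset (ZMod (k + 1)))
      · intro x _
        simp [hagree x]
      · calc (P - Q).natDegree ≤ max P.natDegree Q.natDegree := natDegree_sub_le P Q
          _ ≤ k := max_le hdP hdQ
          _ < (Finset.univ : Finset (ZMod (k + 1))).card := by
            simp [ZMod.card]
    exact sub_eq_zero.mp h0
  have hPc : P.coeff k = 1 := by
    have hmon : P.Monic := by
      rw [hP]
      exact monic_prod_of_monic _ _ fun i _ => monic_X_add_C (c i)
    have hdeg : P.natDegree = k := by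
      rw [hP, natDegree_prod_of_monic _ _ fun i _ => monic_X_add_C (c i)]
      simp
    have := hmon.coeff_natDegree
    rwa [hdeg] at this
  have hQc : Q.coeff k = -(G.card : ZMod (k + 1)) := by
    rw [hQ, Polynomial.finset_sum_coeff]
    have : ∀ m ∈ G, ((1 : Polynomial (ZMod (k + 1))) -
        (X - C ((m : (ZMod (k + 1))ˣ) : ZMod (k + 1))) ^ k).coeff k = -1 := by
      intro m _
      have hmon : ((X - C ((m : (ZMod (k + 1))ˣ) : ZMod (k + 1))) ^ k).Monic :=
        (monic_X_sub_C _).pow k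
      have hdeg : ((X - C ((m : (ZMod (k + 1))ˣ) : ZMod (k + 1))) ^ k).natDegree = k := by
        rw [Polynomial.natDegree_pow, natDegree_X_sub_C, mul_one]
      have h1 : ((X - C ((m : (ZMod (k + 1))ˣ) : ZMod (k + 1))) ^ k).coeff k = 1 := by
        have := hmon.coeff_natDegree
        rwa [hdeg] at this
      have hk0 : k ≠ 0 := by omega
      simp [Polynomial.coeff_sub, h1, Polynomial.coeff_one, hk0]
    rw [Finset.sum_congr rfl this]
    simp
  have hkey : (1 : ZMod (k + 1)) = -(G.card : ZMod (k + 1)) := by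
    rw [← hPc, hPQ, hQc]
  refine ⟨hPQ, hkey, ?_⟩
  have hcast : ((G.card : ℕ) : ZMod (k + 1)) = ((k : ℕ) : ZMod (k + 1)) := by
    have h0 : ((k + 1 : ℕ) : ZMod (k + 1)) = 0 := ZMod.natCast_self _
    push_cast at h0
    have hk' : ((k : ℕ) : ZMod (k + 1)) = -1 := by linear_combination h0
    rw [hk']
    linear_combination hkey
  have h1 := congrArg ZMod.val hcast
  rwa [ZMod.val_cast_of_lt (by omega), ZMod.val_cast_of_lt (by omega)] at h1
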